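/- Let n be an odd positive integer, m = (n−1)/2, d = 2·3^m + 1, and F(X) = X^d on F_{3^n}. Then for a, b ∈ F_{3^n}: ∇_F(a,b) = 3^n if ab = 0; if ab ≠ 0 and a·b^{3^m} + a^{3^m}·b ≠ 0 and (−a·b^{3^m}/(a·b^{3^m} + a^{3^m}·b))^E = 1, where E = ∑_{i=0}^{n−1} 3^{i·m}, then ∇_F(a,b) = 3; and ∇_F(a,b) = 1 in all other cases with ab ≠ 0. -/

import Mathlib

open Finset

/-- Second-order zero differential spectrum of `f` at `(a, b)`:
the number of `X` with `f(X+a+b) - f(X+b) - f(X+a) + f(X) = 0`. -/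
def sozdSpec {K : Type*} [Field K] [Fintype K] [DecidableEq K] (f : K → K) (a b : K) : ℕ :=
  (Finset.univ.filter fun X : K => f (X + a + b) - f (X + b) - f (X + a) + f X = 0).card

/-- DDT entry of `f` at `(a, b)`: the number of `X` with `f(X+a) - f(X) = b`. -/
def ddtEntry {K : Type*} [Field K] [Fintype K] [DecidableEq K] (f : K → K) (a b : K) : ℕ :=
  (Finset.univ.filter fun X : K => f (X + a) - f X = b).card

/-- Differential uniformity of `f`: `max {Δ_f(a,b) : a ≠ 0, b}`. -/
def diffUnif {K : Type*} [Field K] [Fintype K] [DecidableEq K] (f : K → K) : ℕ :=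
  Finset.sup ((Finset.univ.filter fun a : K => a ≠ 0) ×ˢ Finset.univ)
    fun ab => ddtEntry f ab.1 ab.2

/-- Second-order zero differential uniformity (odd characteristic):
`max {∇_f(a,b) : a ≠ 0, b ≠ 0}`. -/
def sozdUnifOdd {K : Type*} [Field K] [Fintype K] [DecidableEq K] (f : K → K) : ℕ :=
  Finset.sup ((Finset.univ.filter fun a : K => a ≠ 0) ×ˢ
      (Finset.univ.filter fun b : K => b ≠ 0))
    fun ab => sozdSpec f ab.1 ab.2


lemma key_identity {K : Type*} [Field K] [CharP K 3] (m : ℕ) (a b X : K) :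
    (X + a + b) ^ (2 * 3 ^ m + 1) - (X + b) ^ (2 * 3 ^ m + 1) - (X + a) ^ (2 * 3 ^ m + 1)
      + X ^ (2 * 3 ^ m + 1)
    = -(a ^ 3 ^ m * b ^ 3 ^ m * (X - a - b)
        + (a * b ^ 3 ^ m + a ^ 3 ^ m * b) * (X - a - b) ^ 3 ^ m) := by
  haveI : Fact (Nat.Prime 3) := ⟨by norm_num⟩
  have hpow : ∀ z : K, z ^ (2 * 3 ^ m + 1) = (z ^ 3 ^ m) ^ 2 * z := by
    intro z
    rw [← pow_mul, ← pow_succ]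
    ring_nf
  have h3 : (3 : K) = 0 := CharP.cast_eq_zero K 3
  rw [hpow, hpow, hpow, hpow,
    add_pow_char_pow (x := X + a) (y := b), add_pow_char_pow (x := X) (y := a),
    add_pow_char_pow (x := X) (y := b),
    sub_pow_char_pow (x := X - a) (y := b), sub_pow_char_pow (x := X) (y := a)]
  linear_combination (a ^ 3 ^ m * b ^ 3 ^ m * X + (a * b ^ 3 ^ m + a ^ 3 ^ m * b) * X ^ 3 ^ m) * h3

lemma gcd_fact (m : ℕ) : Nat.gcd (3 ^ m - 1) (3 ^ (2 * m + 1) - 1) = 2 := by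
  have hx : 1 ≤ 3 ^ m := Nat.one_le_pow _ _ (by norm_num)
  have hodd : 3 ^ m % 2 = 1 := Nat.odd_iff.mp (Odd.pow (by decide))
  have e0 : 3 ^ (2 * m + 1) = 3 * (3 ^ m * 3 ^ m) := by ring
  have e1 : (3 ^ m - 1) * (3 * 3 ^ m + 3) = 3 ^ m * (3 * 3 ^ m + 3) - (3 * 3 ^ m + 3) := by
    rw [Nat.sub_mul, one_mul]
  have e2 : 3 ^ m * (3 * 3 ^ m + 3) = 3 * (3 ^ m * 3 ^ m) + 3 * 3 ^ m := by ring
  have hR : 1 ≤ 3 ^ m * 3 ^ m := Nat.one_le_iff_ne_zero.mpr (by positivity)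
  have hrw : 3 ^ (2 * m + 1) - 1 = 2 + (3 ^ m - 1) * (3 * 3 ^ m + 3) := by omega
  rw [hrw, Nat.gcd_add_mul_left_right (3 ^ m - 1) 2 (3 * 3 ^ m + 3)]
  exact Nat.gcd_eq_right (by omega)

lemma geo_nat (m n : ℕ) :
    (3 ^ m - 1) * (∑ i ∈ range n, 3 ^ (i * m)) = 3 ^ (n * m) - 1 := by
  have h1 : 1 ≤ 3 ^ m := Nat.one_le_pow _ _ (by norm_num)
  have h2 : 1 ≤ 3 ^ (n * m) := Nat.one_le_pow _ _ (by norm_num)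
  have key := geom_sum_mul ((3 : ℤ) ^ m) n
  have hsum : ∑ i ∈ range n, (3 : ℤ) ^ (i * m) = ∑ i ∈ range n, ((3 : ℤ) ^ m) ^ i :=
    Finset.sum_congr rfl fun i _ => by rw [← pow_mul, mul_comm]
  zify [h1, h2]
  rw [hsum, mul_comm, key, ← pow_mul, mul_comm m n]

lemma E_odd {n : ℕ} (hn : Odd n) (m : ℕ) : Odd (∑ i ∈ range n, 3 ^ (i * m)) := by
  rw [Nat.odd_iff, Finset.sum_nat_mod]
  have : ∀ i, 3 ^ (i * m) % 2 = 1 := fun i => Nat.odd_iff.mp (Odd.pow (by decide))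
  simp only [this, Finset.sum_const, card_range, smul_eq_mul, mul_one]
  exact Nat.odd_iff.mp hn

lemma q_mod4 {n : ℕ} (hn : Odd n) : (3 ^ n - 1) / 2 % 2 = 1 := by
  obtain ⟨j, hj⟩ := hn
  have h9 : 9 ^ j % 4 = 1 := by rw [Nat.pow_mod]; norm_num
  have h3n : 3 ^ n % 4 = 3 := by
    subst hj
    have e : 3 ^ (2 * j + 1) = 9 ^ j * 3 := by
      rw [pow_succ, pow_mul]; norm_num
    rw [e, Nat.mul_mod, h9]
  have hge : 3 ≤ 3 ^ n := by
    calc 3 = 3 ^ 1 := (pow_one 3).symm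
    _ ≤ 3 ^ n := Nat.pow_le_pow_right (by norm_num) (by omega)
  omega

lemma pow_q_iter {K : Type*} [Field K] (q : ℕ) (hq : ∀ x : K, x ^ q = x) :
    ∀ (j : ℕ) (x : K), x ^ q ^ j = x := by
  intro j
  induction j with
  | zero => intro x; simpa using rfl
  | succ j ih => intro x; rw [pow_succ, pow_mul, ih, hq]

lemma ker_count {n : ℕ} (hn : Odd n) {K : Type*} [Field K] [Fintype K] [DecidableEq K]
    [CharP K 3] (hcard : Fintype.card K = 3 ^ n) (m : ℕ) (hnm : n = 2 * m + 1) (a b : K)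
    (ha : a ≠ 0) (hb : b ≠ 0) :
    (Finset.univ.filter fun Y : K =>
        a ^ 3 ^ m * b ^ 3 ^ m * Y + (a * b ^ 3 ^ m + a ^ 3 ^ m * b) * Y ^ 3 ^ m = 0).card =
    if a * b ^ 3 ^ m + a ^ 3 ^ m * b ≠ 0 ∧
        (-(a * b ^ 3 ^ m) / (a * b ^ 3 ^ m + a ^ 3 ^ m * b)) ^
          (∑ i ∈ Finset.range n, 3 ^ (i * m)) = 1 then 3 else 1 := by
  have h3K : (3 : K) = 0 := CharP.cast_eq_zero K 3
  have htpos : 1 ≤ (3:ℕ) ^ m := Nat.one_le_pow _ _ (by norm_num)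
  have ht1 : (3:ℕ) ^ m - 1 + 1 = 3 ^ m := by omega
  have hq : ∀ x : K, x ^ (3 ^ n) = x := fun x => by rw [← hcard]; exact FiniteField.pow_card x
  have hqm : ∀ x : K, x ^ 3 ^ (n * m) = x := by
    intro x; rw [pow_mul]; exact pow_q_iter (3 ^ n) hq m x
  have hE1 : ∀ x : K, x ≠ 0 → (x ^ (3 ^ m - 1)) ^ (∑ i ∈ range n, 3 ^ (i * m)) = 1 := by
    intro x hx
    rw [← pow_mul, geo_nat]
    have h2 : x ^ (3 ^ (n * m) - 1) * x = 1 * x := by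
      rw [one_mul, ← pow_succ]
      have : 3 ^ (n * m) - 1 + 1 = 3 ^ (n * m) := by
        have : 1 ≤ (3:ℕ) ^ (n * m) := Nat.one_le_pow _ _ (by norm_num)
        omega
      rw [this]; exact hqm x
    exact mul_right_cancel₀ hx h2
  have hA : a ^ 3 ^ m ≠ 0 := pow_ne_zero _ ha
  have hB : b ^ 3 ^ m ≠ 0 := pow_ne_zero _ hb
  by_cases hs : a * b ^ 3 ^ m + a ^ 3 ^ m * b = 0
  · rw [if_neg (by simp [hs])]
    have hset : (Finset.univ.filter fun Y : K =>
        a ^ 3 ^ m * b ^ 3 ^ m * Y + (a * b ^ 3 ^ m + a ^ 3 ^ m * b) * Y ^ 3 ^ m = 0) = {0} := by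
      ext Y
      simp only [mem_filter, mem_univ, true_and, mem_singleton, hs, zero_mul, add_zero,
        mul_eq_zero]
      constructor
      · rintro ((h | h) | h)
        · exact absurd h hA
        · exact absurd h hB
        · exact h
      · rintro rfl; tauto
    rw [hset, card_singleton]
  · set E := ∑ i ∈ range n, 3 ^ (i * m) with hE_def
    set u : K := -(a ^ 3 ^ m * b ^ 3 ^ m) / (a * b ^ 3 ^ m + a ^ 3 ^ m * b) with hu_def
    have hu : u ≠ 0 := div_ne_zero (neg_ne_zero.mpr (mul_ne_zero hA hB)) hs
    have hpa : a ^ 3 ^ m = a ^ (3 ^ m - 1) * a := by rw [← pow_succ, ht1]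
    have hca : u = (-(a * b ^ 3 ^ m) / (a * b ^ 3 ^ m + a ^ 3 ^ m * b)) * a ^ (3 ^ m - 1) := by
      rw [hu_def, div_mul_eq_mul_div]
      congr 1
      rw [hpa]; ring
    have hcond : (-(a * b ^ 3 ^ m) / (a * b ^ 3 ^ m + a ^ 3 ^ m * b)) ^ E = u ^ E := by
      rw [hca, mul_pow, hE1 a ha, mul_one]
    have hker : ∀ Y : K, Y ≠ 0 →
        ((a ^ 3 ^ m * b ^ 3 ^ m * Y + (a * b ^ 3 ^ m + a ^ 3 ^ m * b) * Y ^ 3 ^ m = 0) ↔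
          Y ^ (3 ^ m - 1) = u) := by
      intro Y hY
      have hYt : Y ^ 3 ^ m = Y ^ (3 ^ m - 1) * Y := by rw [← pow_succ, ht1]
      have hiff : (Y ^ (3 ^ m - 1) = u) ↔
          Y ^ (3 ^ m - 1) * (a * b ^ 3 ^ m + a ^ 3 ^ m * b) = -(a ^ 3 ^ m * b ^ 3 ^ m) := by
        rw [hu_def, eq_div_iff hs]
      rw [hiff]
      constructor
      · intro h
        apply mul_right_cancel₀ hY
        rw [hYt] at h
        linear_combination h
      · intro h
        rw [hYt]
        linear_combination Y * h
    by_cases hC : u ^ E = 1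
    · rw [if_pos ⟨hs, by rw [hcond]; exact hC⟩]
      -- u is a nonzero square
      have hq2 : (3:ℕ) ^ n % 2 = 1 := Nat.odd_iff.mp (Odd.pow (by decide))
      have hu2 : u ^ (3 ^ n - 1) = 1 := by
        rw [← hcard]; exact FiniteField.pow_card_sub_one_eq_one u hu
      have hg1 : u ^ Nat.gcd E (3 ^ n - 1) = 1 := pow_gcd_eq_one.mpr ⟨hC, hu2⟩
      have hgodd : Odd (Nat.gcd E (3 ^ n - 1)) := by
        have hEo : Odd E := by rw [hE_def]; exact E_odd hn m
        obtain ⟨c, hc⟩ := Nat.gcd_dvd_left E (3 ^ n - 1)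
        rw [hc] at hEo
        exact (Nat.odd_mul.mp hEo).1
      have hkodd : (3 ^ n - 1) / 2 % 2 = 1 := q_mod4 hn
      have hdvd : Nat.gcd E (3 ^ n - 1) ∣ (3 ^ n - 1) / 2 := by
        have h2k : 3 ^ n - 1 = (3 ^ n - 1) / 2 * 2 := by omega
        have hco : Nat.Coprime (Nat.gcd E (3 ^ n - 1)) 2 := by
          exact Odd.coprime_two_right hgodd
        exact hco.dvd_of_dvd_mul_right (h2k ▸ Nat.gcd_dvd_right E (3 ^ n - 1))
      have hsqpow : u ^ ((3 ^ n - 1) / 2) = 1 := by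
        rw [← Nat.div_mul_cancel hdvd, mul_comm, pow_mul, hg1, one_pow]
      have hsq : IsSquare u := by
        rw [FiniteField.isSquare_iff (by rw [ringChar.eq K 3]; norm_num) hu, hcard]
        have : (3:ℕ) ^ n / 2 = (3 ^ n - 1) / 2 := by omega
        rw [this]; exact hsqpow
      obtain ⟨v, hv⟩ := hsq
      have hvne : v ≠ 0 := by rintro rfl; rw [mul_zero] at hv; exact hu hv
      have hgcd2 : Nat.gcd (3 ^ m - 1) (3 ^ n - 1) = 2 := by rw [hnm]; exact gcd_fact m
      set a' : ℤ := ((3 ^ m - 1 : ℕ) : ℤ) with ha'_def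
      set b' : ℤ := ((3 ^ n - 1 : ℕ) : ℤ) with hb'_def
      have hbez : (2 : ℤ) = a' * Int.gcdA a' b' + b' * Int.gcdB a' b' := by
        have h := Int.gcd_eq_gcd_ab a' b'
        rw [ha'_def, hb'_def, Int.gcd_natCast_natCast, hgcd2] at h
        exact_mod_cast h
      set w : K := v ^ Int.gcdA a' b' with hw_def
      have hw0 : w ≠ 0 := zpow_ne_zero _ hvne
      have hvq : v ^ b' = 1 := by
        rw [hb'_def, zpow_natCast, ← hcard]
        exact FiniteField.pow_card_sub_one_eq_one v hvne
      have hw : w ^ (3 ^ m - 1) = u := by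
        rw [hw_def, ← zpow_natCast (v ^ Int.gcdA a' b') (3 ^ m - 1), ← zpow_mul, ← ha'_def,
          mul_comm (Int.gcdA a' b') a',
          show a' * Int.gcdA a' b' = 2 - b' * Int.gcdB a' b' by linarith [hbez],
          zpow_sub₀ hvne, zpow_mul, hvq, one_zpow, div_one]
        rw [show (2:ℤ) = ((2:ℕ):ℤ) by norm_num, zpow_natCast, pow_two, ← hv]
      have hpow2 : ∀ x : K, x ≠ 0 → x ^ (3 ^ m - 1) = 1 → x ^ (3 ^ n - 1) = 1 → x * x = 1 := by
        intro x hx h1 h2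
        have hxa : x ^ a' = 1 := by rw [ha'_def, zpow_natCast, h1]
        have hxb : x ^ b' = 1 := by rw [hb'_def, zpow_natCast, h2]
        have h2' : x ^ (2 : ℤ) = 1 := by
          rw [hbez, zpow_add₀ hx, zpow_mul, zpow_mul, hxa, hxb, one_zpow, one_zpow, mul_one]
        rw [show (2:ℤ) = ((2:ℕ):ℤ) by norm_num, zpow_natCast, pow_two] at h2'
        exact h2'
      have hset : (Finset.univ.filter fun Y : K =>
          a ^ 3 ^ m * b ^ 3 ^ m * Y + (a * b ^ 3 ^ m + a ^ 3 ^ m * b) * Y ^ 3 ^ m = 0)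
          = {0, w, -w} := by
        ext Y
        simp only [mem_filter, mem_univ, true_and, mem_insert, mem_singleton]
        constructor
        · intro h
          by_cases hY : Y = 0
          · exact Or.inl hY
          · have hYu := (hker Y hY).mp h
            have hYw0 : Y / w ≠ 0 := div_ne_zero hY hw0
            have hx1 : (Y / w) ^ (3 ^ m - 1) = 1 := by
              rw [div_pow, hYu, hw, div_self hu]
            have hxq : (Y / w) ^ (3 ^ n - 1) = 1 := by
              rw [← hcard]; exact FiniteField.pow_card_sub_one_eq_one _ hYw0
            rcases mul_self_eq_one_iff.mp (hpow2 _ hYw0 hx1 hxq) with h1 | h1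
            · refine Or.inr (Or.inl ?_)
              have := (div_eq_iff hw0).mp h1
              rw [one_mul] at this
              exact this
            · refine Or.inr (Or.inr ?_)
              have := (div_eq_iff hw0).mp h1
              rw [this]; ring
        · intro h
          rcases h with rfl | rfl | rfl
          · simp [zero_pow (by positivity : (3:ℕ) ^ m ≠ 0)]
          · exact (hker w hw0).mpr hw
          · refine (hker (-w) (neg_ne_zero.mpr hw0)).mpr ?_
            have heven : Even (3 ^ m - 1) := by
              have h1 : (3:ℕ) ^ m % 2 = 1 := Nat.odd_iff.mp (Odd.pow (by decide))
              exact Nat.even_iff.mpr (by omega)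
            rw [heven.neg_pow, hw]
      rw [hset]
      have h2K : (2 : K) = -1 := by linear_combination h3K
      have hwne : w ≠ -w := by
        intro hcontra
        apply hw0
        have h2w : (2 : K) * w = 0 := by linear_combination hcontra
        rw [h2K] at h2w
        simpa using h2w
      have h0m : (0 : K) ∉ ({w, -w} : Finset K) := by
        simp only [mem_insert, mem_singleton]
        push_neg
        exact ⟨fun h => hw0 h.symm, fun h => hw0 (neg_eq_zero.mp h.symm)⟩
      have hwm : w ∉ ({-w} : Finset K) := by simpa using hwne
      rw [card_insert_of_notMem h0m, card_insert_of_notMem hwm, card_singleton]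
    · rw [if_neg (fun hcc => hC (by rw [← hcond]; exact hcc.2))]
      have hset : (Finset.univ.filter fun Y : K =>
          a ^ 3 ^ m * b ^ 3 ^ m * Y + (a * b ^ 3 ^ m + a ^ 3 ^ m * b) * Y ^ 3 ^ m = 0)
          = {0} := by
        ext Y
        simp only [mem_filter, mem_univ, true_and, mem_singleton]
        constructor
        · intro h
          by_contra hY
          exact hC (by rw [← (hker Y hY).mp h]; exact hE1 Y hY)
        · rintro rfl
          simp [zero_pow (by positivity : (3:ℕ) ^ m ≠ 0)]
      rw [hset, card_singleton]


/-- Second-order zero differential spectrum of `F(X) = X^{2·3^m + 1}` over `F_{3^n}`,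
`n` odd, `m = (n-1)/2`. -/
theorem sozd_spectrum_dobbertin
    {n : ℕ} (hn : Odd n) (hn0 : 0 < n)
    {K : Type*} [Field K] [Fintype K] [DecidableEq K] [CharP K 3]
    (hcard : Fintype.card K = 3 ^ n)
    (m : ℕ) (hm : m = (n - 1) / 2)
    (a b : K) :
    (a * b = 0 → sozdSpec (fun X : K => X ^ (2 * 3 ^ m + 1)) a b = 3 ^ n) ∧
    (a * b ≠ 0 →
      sozdSpec (fun X : K => X ^ (2 * 3 ^ m + 1)) a b =
        if a * b ^ (3 ^ m) + a ^ (3 ^ m) * b ≠ 0 ∧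
            (-(a * b ^ (3 ^ m)) / (a * b ^ (3 ^ m) + a ^ (3 ^ m) * b)) ^
              (∑ i ∈ Finset.range n, 3 ^ (i * m)) = 1
        then 3 else 1) := by
  have hnm : n = 2 * m + 1 := by
    obtain ⟨j, hj⟩ := hn
    omega
  constructor
  · intro hab
    simp only [sozdSpec]
    rcases mul_eq_zero.mp hab with h | h
    · subst h
      rw [Finset.filter_true_of_mem (fun X _ => by ring), Finset.card_univ, hcard]
    · subst h
      rw [Finset.filter_true_of_mem (fun X _ => by ring), Finset.card_univ, hcard]
  · intro hab
    have ha : a ≠ 0 := fun h => hab (by rw [h, zero_mul])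
    have hb : b ≠ 0 := fun h => hab (by rw [h, mul_zero])
    simp only [sozdSpec]
    have hcongr : (Finset.univ.filter fun X : K =>
        (fun X : K => X ^ (2 * 3 ^ m + 1)) (X + a + b) - (fun X : K => X ^ (2 * 3 ^ m + 1)) (X + b)
          - (fun X : K => X ^ (2 * 3 ^ m + 1)) (X + a) + (fun X : K => X ^ (2 * 3 ^ m + 1)) X = 0).card
        = (Finset.univ.filter fun Y : K =>
            a ^ 3 ^ m * b ^ 3 ^ m * Y + (a * b ^ 3 ^ m + a ^ 3 ^ m * b) * Y ^ 3 ^ m = 0).card := by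
      apply Finset.card_equiv (Equiv.subRight (a + b))
      intro X
      simp only [Finset.mem_filter, Finset.mem_univ, true_and, Equiv.subRight_apply]
      rw [key_identity m a b X, neg_eq_zero, sub_sub]
    rw [hcongr]
    exact ker_count hn hcard m hnm a b ha hb
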